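/- Let M and M' be two finite discounted MDPs over the same finite state space S, finite action space A, discount γ ∈ [0,1), with transition kernels P_M, P_{M'} and reward functions R_M, R_{M'} : S×A → [0,1], and suppose the value functions of M' lie in [0, Vmax]. Then for any policy π and any initial state distribution d0: |J_M(π) − J_{M'}(π)| ≤ (Vmax/(1−γ)) · E_{(s,a)~d_M^π}[ TV(P_M(·|s,a), P_{M'}(·|s,a)) ] + (1/(1−γ)) · E_{(s,a)~d_M^π}[ |R_M(s,a) − R_{M'}(s,a)| ]. -/

import Mathlib

noncomputable section

open Finset

variable {S A : Type*}

/-- One-step forward update of a state–action distribution under kernel `P` and policy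
`pol`: the next distribution at `(s', a')` is `(∑_{(s,a)} d (s,a) P(s'|s,a)) pol(a'|s')`. -/
def mdpStep [Fintype S] [Fintype A] (P : S × A → S → ℝ) (pol : S → A → ℝ)
    (d : S × A → ℝ) : S × A → ℝ :=
  fun q => (∑ p : S × A, d p * P p q.1) * pol q.1 q.2

/-- Distribution over state–action pairs at time `t`, starting from `d` at time `0` and
running policy `pol` in the MDP with kernel `P`. -/
def saDist [Fintype S] [Fintype A] (P : S × A → S → ℝ) (pol : S → A → ℝ)
    (d : S × A → ℝ) : ℕ → S × A → ℝ
  | 0 => d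
  | t + 1 => mdpStep P pol (saDist P pol d t)

/-- Expected discounted return `E[∑ₜ γᵗ R(sₜ,aₜ)]` starting from the state–action
distribution `d` at time `0`. -/
def JgenSA [Fintype S] [Fintype A] (P : S × A → S → ℝ) (R : S × A → ℝ)
    (pol : S → A → ℝ) (d : S × A → ℝ) (γ : ℝ) : ℝ :=
  ∑' t : ℕ, γ ^ t * ∑ q : S × A, saDist P pol d t q * R q

/-- Expected discounted return `J_M(π)` from the initial state distribution `d0`. -/
def Jret [Fintype S] [Fintype A] (P : S × A → S → ℝ) (R : S × A → ℝ)
    (pol : S → A → ℝ) (d0 : S → ℝ) (γ : ℝ) : ℝ :=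
  JgenSA P R pol (fun q => d0 q.1 * pol q.1 q.2) γ

/-- Discounted state–action occupancy
`d_M^π(s,a) = (1−γ) ∑ₜ γᵗ Pr(sₜ = s, aₜ = a)`. -/
def occSA [Fintype S] [Fintype A] (P : S × A → S → ℝ) (pol : S → A → ℝ)
    (d0 : S → ℝ) (γ : ℝ) : S × A → ℝ :=
  fun q => (1 - γ) * ∑' t : ℕ, γ ^ t * saDist P pol (fun q' => d0 q'.1 * pol q'.1 q'.2) t q

/-- Value function `V_M^π(s)`: the expected discounted return started from state `s`. -/
def Vval [Fintype S] [Fintype A] [DecidableEq S] (P : S × A → S → ℝ) (R : S × A → ℝ)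
    (pol : S → A → ℝ) (γ : ℝ) (s : S) : ℝ :=
  Jret P R pol (fun s' => if s' = s then 1 else 0) γ

/-- Total variation distance between two finitely supported distributions,
`TV(p,q) = (1/2) ∑ₓ |p x − q x|`. -/
def tvDist [Fintype S] (p q : S → ℝ) : ℝ := (1 / 2) * ∑ x : S, |p x - q x|

section Aux

variable [Fintype S] [Fintype A]

open scoped Classical in
def deltaSA (p : S × A) : S × A → ℝ := fun q => if q = p then 1 else 0

lemma deltaSA_nonneg (p q : S × A) : 0 ≤ deltaSA p q := by
  unfold deltaSA; split <;> norm_num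

lemma deltaSA_sum (p : S × A) : ∑ q : S × A, deltaSA p q = 1 := by
  classical
  simp [deltaSA]

lemma saDist_shift (P : S × A → S → ℝ) (pol : S → A → ℝ) (d : S × A → ℝ) :
    ∀ t, saDist P pol d (t + 1) = saDist P pol (mdpStep P pol d) t
  | 0 => rfl
  | t + 1 => by
    show mdpStep P pol (saDist P pol d (t + 1)) = _
    rw [saDist_shift P pol d t]
    rfl

variable {P : S × A → S → ℝ} {pol : S → A → ℝ}

lemma mdpStep_nonneg (hP0 : ∀ q x, 0 ≤ P q x) (hpol0 : ∀ s a, 0 ≤ pol s a)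
    {d : S × A → ℝ} (hd : ∀ q, 0 ≤ d q) (q : S × A) :
    0 ≤ mdpStep P pol d q :=
  mul_nonneg (Finset.sum_nonneg fun p _ => mul_nonneg (hd p) (hP0 p q.1)) (hpol0 q.1 q.2)

lemma mdpStep_sum (hP1 : ∀ q, ∑ x : S, P q x = 1) (hpol1 : ∀ s, ∑ a : A, pol s a = 1)
    (d : S × A → ℝ) :
    ∑ q : S × A, mdpStep P pol d q = ∑ p : S × A, d p := by
  unfold mdpStep
  rw [Fintype.sum_prod_type]
  calc ∑ s : S, ∑ a : A, (∑ p : S × A, d p * P p s) * pol s a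
      = ∑ s : S, (∑ p : S × A, d p * P p s) * ∑ a : A, pol s a := by
        simp [Finset.mul_sum]
    _ = ∑ s : S, ∑ p : S × A, d p * P p s := by simp [hpol1]
    _ = ∑ p : S × A, d p * ∑ s : S, P p s := by
        rw [Finset.sum_comm]; simp [Finset.mul_sum]
    _ = ∑ p : S × A, d p := by simp [hP1]

lemma saDist_nonneg (hP0 : ∀ q x, 0 ≤ P q x) (hpol0 : ∀ s a, 0 ≤ pol s a)
    {d : S × A → ℝ} (hd : ∀ q, 0 ≤ d q) :
    ∀ t q, 0 ≤ saDist P pol d t q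
  | 0 => hd
  | t + 1 => mdpStep_nonneg hP0 hpol0 (saDist_nonneg hP0 hpol0 hd t)

lemma saDist_sum (hP1 : ∀ q, ∑ x : S, P q x = 1) (hpol1 : ∀ s, ∑ a : A, pol s a = 1)
    {d : S × A → ℝ} (hd : ∑ q : S × A, d q = 1) :
    ∀ t, ∑ q : S × A, saDist P pol d t q = 1
  | 0 => hd
  | t + 1 => by
    show ∑ q : S × A, mdpStep P pol (saDist P pol d t) q = 1
    rw [mdpStep_sum hP1 hpol1, saDist_sum hP1 hpol1 hd t]

lemma inner_abs_le {d f g : S × A → ℝ} (hd : ∀ q, 0 ≤ d q) (hfg : ∀ q, |f q| ≤ g q) :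
    |∑ q : S × A, d q * f q| ≤ ∑ q : S × A, d q * g q := by
  refine (Finset.abs_sum_le_sum_abs _ _).trans (Finset.sum_le_sum fun q _ => ?_)
  rw [abs_mul, abs_of_nonneg (hd q)]
  exact mul_le_mul_of_nonneg_left (hfg q) (hd q)

lemma inner_abs_le_const {d f : S × A → ℝ} {C : ℝ} (hd : ∀ q, 0 ≤ d q)
    (hdsum : ∑ q : S × A, d q = 1) (hf : ∀ q, |f q| ≤ C) :
    |∑ q : S × A, d q * f q| ≤ C := by
  calc |∑ q : S × A, d q * f q| ≤ ∑ q : S × A, d q * C :=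
        inner_abs_le hd hf
    _ = C := by rw [← Finset.sum_mul, hdsum, one_mul]

lemma summable_geom_bound {γ : ℝ} (hγ0 : 0 ≤ γ) (hγ1 : γ < 1) {x : ℕ → ℝ} {C : ℝ}
    (hx : ∀ t, |x t| ≤ C) : Summable fun t => γ ^ t * x t := by
  apply Summable.of_norm
  refine Summable.of_nonneg_of_le (fun t => norm_nonneg _) (fun t => ?_)
    ((summable_geometric_of_lt_one hγ0 hγ1).mul_right C)
  rw [Real.norm_eq_abs, abs_mul, abs_pow, abs_of_nonneg hγ0]
  exact mul_le_mul_of_nonneg_left (hx t) (pow_nonneg hγ0 t)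

lemma mdpStep_linear (w : S × A → ℝ) (e : S × A → S × A → ℝ) (x : S × A) :
    mdpStep P pol (fun q => ∑ p : S × A, w p * e p q) x
      = ∑ p : S × A, w p * mdpStep P pol (e p) x := by
  unfold mdpStep
  have h1 : (∑ p' : S × A, (∑ p : S × A, w p * e p p') * P p' x.1)
      = ∑ p : S × A, w p * ∑ p' : S × A, e p p' * P p' x.1 := by
    simp only [Finset.sum_mul, Finset.mul_sum, mul_assoc]
    exact Finset.sum_comm
  rw [h1, Finset.sum_mul]
  simp [mul_assoc]

lemma saDist_linear (d : S × A → ℝ) :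
    ∀ t q, saDist P pol d t q = ∑ p : S × A, d p * saDist P pol (deltaSA p) t q
  | 0, q => by
    classical
    simp [saDist, deltaSA, Finset.sum_ite_eq]
  | t + 1, q => by
    show mdpStep P pol (saDist P pol d t) q = _
    have : saDist P pol d t = fun q' => ∑ p : S × A, d p * saDist P pol (deltaSA p) t q' :=
      funext fun q' => saDist_linear d t q'
    rw [this, mdpStep_linear]
    rfl


lemma summable_JgenSA {γ : ℝ} (hγ0 : 0 ≤ γ) (hγ1 : γ < 1)
    (hP0 : ∀ q x, 0 ≤ P q x) (hP1 : ∀ q, ∑ x : S, P q x = 1)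
    (hpol0 : ∀ s a, 0 ≤ pol s a) (hpol1 : ∀ s, ∑ a : A, pol s a = 1)
    {R : S × A → ℝ} {C : ℝ} (hRC : ∀ q, |R q| ≤ C)
    {d : S × A → ℝ} (hd0 : ∀ q, 0 ≤ d q) (hd1 : ∑ q : S × A, d q = 1) :
    Summable fun t => γ ^ t * ∑ q : S × A, saDist P pol d t q * R q :=
  summable_geom_bound hγ0 hγ1 fun t =>
    inner_abs_le_const (saDist_nonneg hP0 hpol0 hd0 t) (saDist_sum hP1 hpol1 hd1 t) hRC

lemma abs_JgenSA_le {γ : ℝ} (hγ0 : 0 ≤ γ) (hγ1 : γ < 1)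
    (hP0 : ∀ q x, 0 ≤ P q x) (hP1 : ∀ q, ∑ x : S, P q x = 1)
    (hpol0 : ∀ s a, 0 ≤ pol s a) (hpol1 : ∀ s, ∑ a : A, pol s a = 1)
    {R : S × A → ℝ} (hR1 : ∀ q, |R q| ≤ 1)
    {d : S × A → ℝ} (hd0 : ∀ q, 0 ≤ d q) (hd1 : ∑ q : S × A, d q = 1) :
    |JgenSA P R pol d γ| ≤ (1 - γ)⁻¹ := by
  have h := tsum_of_norm_bounded (f := fun t => γ ^ t * ∑ q : S × A, saDist P pol d t q * R q)
    (hasSum_geometric_of_lt_one hγ0 hγ1) ?_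
  · exact h
  · intro t
    rw [Real.norm_eq_abs, abs_mul, abs_pow, abs_of_nonneg hγ0]
    calc γ ^ t * |∑ q : S × A, saDist P pol d t q * R q| ≤ γ ^ t * 1 :=
          mul_le_mul_of_nonneg_left
            (inner_abs_le_const (saDist_nonneg hP0 hpol0 hd0 t) (saDist_sum hP1 hpol1 hd1 t) hR1)
            (pow_nonneg hγ0 t)
      _ = γ ^ t := mul_one _

lemma JgenSA_rec {γ : ℝ} (hγ0 : 0 ≤ γ) (hγ1 : γ < 1)
    (hP0 : ∀ q x, 0 ≤ P q x) (hP1 : ∀ q, ∑ x : S, P q x = 1)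
    (hpol0 : ∀ s a, 0 ≤ pol s a) (hpol1 : ∀ s, ∑ a : A, pol s a = 1)
    {R : S × A → ℝ} {C : ℝ} (hRC : ∀ q, |R q| ≤ C)
    {d : S × A → ℝ} (hd0 : ∀ q, 0 ≤ d q) (hd1 : ∑ q : S × A, d q = 1) :
    JgenSA P R pol d γ
      = (∑ q : S × A, d q * R q) + γ * JgenSA P R pol (mdpStep P pol d) γ := by
  have hsum := summable_JgenSA hγ0 hγ1 hP0 hP1 hpol0 hpol1 hRC hd0 hd1
  unfold JgenSA
  rw [Summable.tsum_eq_zero_add hsum]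
  congr 1
  · simp [saDist]
  · rw [← tsum_mul_left]
    apply tsum_congr
    intro t
    rw [saDist_shift]
    ring

lemma JgenSA_linear {γ : ℝ} (hγ0 : 0 ≤ γ) (hγ1 : γ < 1)
    (hP0 : ∀ q x, 0 ≤ P q x) (hP1 : ∀ q, ∑ x : S, P q x = 1)
    (hpol0 : ∀ s a, 0 ≤ pol s a) (hpol1 : ∀ s, ∑ a : A, pol s a = 1)
    {R : S × A → ℝ} {C : ℝ} (hRC : ∀ q, |R q| ≤ C) (d : S × A → ℝ) :
    JgenSA P R pol d γ = ∑ p : S × A, d p * JgenSA P R pol (deltaSA p) γ := by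
  have hdel : ∀ p : S × A,
      Summable fun t => γ ^ t * ∑ q : S × A, saDist P pol (deltaSA p) t q * R q := fun p =>
    summable_JgenSA hγ0 hγ1 hP0 hP1 hpol0 hpol1 hRC (deltaSA_nonneg p) (deltaSA_sum p)
  unfold JgenSA
  calc ∑' t : ℕ, γ ^ t * ∑ q : S × A, saDist P pol d t q * R q
      = ∑' t : ℕ, ∑ p : S × A,
          d p * (γ ^ t * ∑ q : S × A, saDist P pol (deltaSA p) t q * R q) := by
        apply tsum_congr
        intro t
        have h1 : ∑ q : S × A, saDist P pol d t q * R q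
            = ∑ p : S × A, d p * ∑ q : S × A, saDist P pol (deltaSA p) t q * R q := by
          have h2 : ∀ q : S × A, saDist P pol d t q * R q
              = ∑ p : S × A, d p * (saDist P pol (deltaSA p) t q * R q) := by
            intro q
            rw [saDist_linear (P := P) (pol := pol) d t q, Finset.sum_mul]
            simp [mul_assoc]
          simp only [h2, Finset.mul_sum]
          exact Finset.sum_comm
        rw [h1, Finset.mul_sum]
        apply Finset.sum_congr rfl
        intro p _
        ring
    _ = ∑ p : S × A, ∑' t : ℕ,
          d p * (γ ^ t * ∑ q : S × A, saDist P pol (deltaSA p) t q * R q) :=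
        Summable.tsum_finsetSum fun p _ => (hdel p).mul_left (d p)
    _ = ∑ p : S × A, d p * ∑' t : ℕ,
          γ ^ t * ∑ q : S × A, saDist P pol (deltaSA p) t q * R q := by
        apply Finset.sum_congr rfl
        intro p _
        exact tsum_mul_left

lemma inner_mdpStep (d F : S × A → ℝ) (V : S → ℝ)
    (hpolF : ∀ s, ∑ a : A, pol s a * F (s, a) = V s) :
    ∑ q : S × A, mdpStep P pol d q * F q
      = ∑ p : S × A, d p * ∑ s' : S, P p s' * V s' := by
  unfold mdpStep
  rw [Fintype.sum_prod_type]
  calc ∑ s : S, ∑ a : A, (∑ p : S × A, d p * P p s) * pol s a * F (s, a)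
      = ∑ s : S, (∑ p : S × A, d p * P p s) * ∑ a : A, pol s a * F (s, a) := by
        simp [Finset.mul_sum, mul_assoc]
    _ = ∑ s : S, (∑ p : S × A, d p * P p s) * V s := by simp [hpolF]
    _ = ∑ s : S, ∑ p : S × A, d p * (P p s * V s) := by
        simp [Finset.sum_mul, mul_assoc]
    _ = ∑ p : S × A, ∑ s : S, d p * (P p s * V s) := Finset.sum_comm
    _ = ∑ p : S × A, d p * ∑ s' : S, P p s' * V s' := by simp [Finset.mul_sum]

end Aux

/-- simulation lemma.
For two MDPs `M = (P, R)` and `M' = (P', R')` on the same finite state/action spaces with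
discount `γ ∈ [0,1)`, rewards in `[0,1]`, and the value functions of `M'` lying in
`[0, Vmax]`, for any policy `pol` and initial distribution `d0`:
`|J_M(π) − J_{M'}(π)| ≤ (Vmax/(1−γ)) E_{(s,a)∼d_M^π}[TV(P(·|s,a), P'(·|s,a))]
  + (1/(1−γ)) E_{(s,a)∼d_M^π}[|R(s,a) − R'(s,a)|]`. -/
theorem simulation_lemma [Fintype S] [Fintype A] [Nonempty S] [Nonempty A] [DecidableEq S]
    (γ : ℝ) (hγ : γ ∈ Set.Ico (0 : ℝ) 1)
    (P P' : S × A → S → ℝ)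
    (hP0 : ∀ q x, 0 ≤ P q x) (hP1 : ∀ q, ∑ x : S, P q x = 1)
    (hP'0 : ∀ q x, 0 ≤ P' q x) (hP'1 : ∀ q, ∑ x : S, P' q x = 1)
    (R R' : S × A → ℝ)
    (hR : ∀ q, R q ∈ Set.Icc (0 : ℝ) 1) (hR' : ∀ q, R' q ∈ Set.Icc (0 : ℝ) 1)
    (pol : S → A → ℝ) (hpol0 : ∀ s a, 0 ≤ pol s a) (hpol1 : ∀ s, ∑ a : A, pol s a = 1)
    (d0 : S → ℝ) (hd00 : ∀ s, 0 ≤ d0 s) (hd01 : ∑ s : S, d0 s = 1)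
    (Vmax : ℝ) (hV : ∀ s, Vval P' R' pol γ s ∈ Set.Icc (0 : ℝ) Vmax) :
    |Jret P R pol d0 γ - Jret P' R' pol d0 γ| ≤
      Vmax / (1 - γ) * ∑ q : S × A, occSA P pol d0 γ q * tvDist (P q) (P' q)
        + 1 / (1 - γ) * ∑ q : S × A, occSA P pol d0 γ q * |R q - R' q| := by
  obtain ⟨hγ0, hγ1⟩ := hγ
  have h1γ : (0:ℝ) < 1 - γ := by linarith
  set d0π : S × A → ℝ := fun q => d0 q.1 * pol q.1 q.2 with hd0πdef
  have hd0π0 : ∀ q, 0 ≤ d0π q := fun q => mul_nonneg (hd00 q.1) (hpol0 q.1 q.2)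
  have hd0π1 : ∑ q : S × A, d0π q = 1 := by
    rw [hd0πdef, Fintype.sum_prod_type]
    simp [← Finset.mul_sum, hpol1, hd01]
  have hR1 : ∀ q, |R q| ≤ 1 := fun q => abs_le.mpr ⟨by linarith [(hR q).1], (hR q).2⟩
  have hR'1 : ∀ q, |R' q| ≤ 1 := fun q => abs_le.mpr ⟨by linarith [(hR' q).1], (hR' q).2⟩
  set dt : ℕ → S × A → ℝ := saDist P pol d0π with hdtdef
  have hdt0 : ∀ t q, 0 ≤ dt t q := saDist_nonneg hP0 hpol0 hd0π0
  have hdt1 : ∀ t, ∑ q : S × A, dt t q = 1 := saDist_sum hP1 hpol1 hd0π1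
  have hdtle1 : ∀ t q, dt t q ≤ 1 := by
    intro t q
    rw [← hdt1 t]
    exact Finset.single_le_sum (fun p _ => hdt0 t p) (Finset.mem_univ q)
  set Q : S × A → ℝ := fun p => JgenSA P' R' pol (deltaSA p) γ with hQdef
  have hQb : ∀ p, |Q p| ≤ (1 - γ)⁻¹ := fun p =>
    abs_JgenSA_le hγ0 hγ1 hP'0 hP'1 hpol0 hpol1 hR'1 (deltaSA_nonneg p) (deltaSA_sum p)
  set Vv : S → ℝ := Vval P' R' pol γ with hVvdef
  have hVQ : ∀ s, ∑ a : A, pol s a * Q (s, a) = Vv s := by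
    intro s
    rw [hVvdef]
    unfold Vval Jret
    rw [JgenSA_linear hγ0 hγ1 hP'0 hP'1 hpol0 hpol1 hR'1, Fintype.sum_prod_type]
    rw [eq_comm]
    classical
    calc ∑ s' : S, ∑ a : A, (if s' = s then (1:ℝ) else 0) * pol s' a
          * JgenSA P' R' pol (deltaSA (s', a)) γ
        = ∑ s' : S, if s' = s then
            (∑ a : A, pol s' a * JgenSA P' R' pol (deltaSA (s', a)) γ) else 0 := by
          apply Finset.sum_congr rfl
          intro s' _
          split <;> simp [Finset.mul_sum]
      _ = ∑ a : A, pol s a * Q (s, a) := by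
          rw [Finset.sum_ite_eq' Finset.univ s
            (fun s' => ∑ a : A, pol s' a * JgenSA P' R' pol (deltaSA (s', a)) γ)]
          simp [hQdef]
  have hBell : ∀ p, Q p = R' p + γ * ∑ s' : S, P' p s' * Vv s' := by
    intro p
    show JgenSA P' R' pol (deltaSA p) γ = _
    rw [JgenSA_rec hγ0 hγ1 hP'0 hP'1 hpol0 hpol1 hR'1 (deltaSA_nonneg p) (deltaSA_sum p)]
    congr 1
    · classical
      simp [deltaSA]
    · congr 1
      rw [JgenSA_linear hγ0 hγ1 hP'0 hP'1 hpol0 hpol1 hR'1 (mdpStep P' pol (deltaSA p))]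
      rw [show (∑ q : S × A, mdpStep P' pol (deltaSA p) q * JgenSA P' R' pol (deltaSA q) γ)
          = ∑ q : S × A, mdpStep P' pol (deltaSA p) q * Q q from rfl]
      rw [inner_mdpStep (deltaSA p) Q Vv hVQ]
      classical
      simp [deltaSA]
  set fD : S × A → ℝ := fun q => R q - R' q + γ * ∑ s' : S, (P q s' - P' q s') * Vv s'
    with hfDdef
  set gD : S × A → ℝ := fun q => Vmax * tvDist (P q) (P' q) + |R q - R' q| with hgDdef
  have hVmax0 : 0 ≤ Vmax := le_trans (hV (Classical.arbitrary S)).1 (hV (Classical.arbitrary S)).2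
  have htv0 : ∀ q, 0 ≤ tvDist (P q) (P' q) := fun q =>
    mul_nonneg (by norm_num) (Finset.sum_nonneg fun _ _ => abs_nonneg _)
  have htv1 : ∀ q, tvDist (P q) (P' q) ≤ 1 := by
    intro q
    unfold tvDist
    have : ∑ x : S, |P q x - P' q x| ≤ ∑ x : S, (P q x + P' q x) :=
      Finset.sum_le_sum fun x _ =>
        (abs_sub _ _).trans (by rw [abs_of_nonneg (hP0 q x), abs_of_nonneg (hP'0 q x)])
    rw [Finset.sum_add_distrib, hP1 q, hP'1 q] at this
    linarith
  have hfg : ∀ q, |fD q| ≤ gD q := by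
    intro q
    have hzero : ∑ s' : S, (P q s' - P' q s') * (Vmax / 2) = 0 := by
      rw [← Finset.sum_mul, Finset.sum_sub_distrib, hP1 q, hP'1 q]
      ring
    have hcent : ∑ s' : S, (P q s' - P' q s') * Vv s'
        = ∑ s' : S, (P q s' - P' q s') * (Vv s' - Vmax / 2) := by
      have : ∑ s' : S, (P q s' - P' q s') * (Vv s' - Vmax / 2)
          = (∑ s' : S, (P q s' - P' q s') * Vv s')
            - ∑ s' : S, (P q s' - P' q s') * (Vmax / 2) := by
        rw [← Finset.sum_sub_distrib]
        apply Finset.sum_congr rfl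
        intro s' _
        ring
      rw [this, hzero, sub_zero]
    have habs : |∑ s' : S, (P q s' - P' q s') * Vv s'| ≤ Vmax * tvDist (P q) (P' q) := by
      rw [hcent]
      calc |∑ s' : S, (P q s' - P' q s') * (Vv s' - Vmax / 2)|
          ≤ ∑ s' : S, |P q s' - P' q s'| * (Vmax / 2) := by
            refine (Finset.abs_sum_le_sum_abs _ _).trans (Finset.sum_le_sum fun s' _ => ?_)
            rw [abs_mul]
            refine mul_le_mul_of_nonneg_left ?_ (abs_nonneg _)
            have h1 := (hV s').1
            have h2 := (hV s').2
            exact abs_le.mpr ⟨by linarith, by linarith⟩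
        _ = Vmax * tvDist (P q) (P' q) := by
            rw [tvDist, ← Finset.sum_mul]
            ring
    have : |fD q| ≤ |R q - R' q| + |γ * ∑ s' : S, (P q s' - P' q s') * Vv s'| :=
      abs_add_le _ _
    refine this.trans ?_
    show _ ≤ Vmax * tvDist (P q) (P' q) + |R q - R' q|
    rw [add_comm (Vmax * tvDist (P q) (P' q))]
    refine add_le_add le_rfl ?_
    rw [abs_mul, abs_of_nonneg hγ0]
    calc γ * |∑ s' : S, (P q s' - P' q s') * Vv s'| ≤ 1 * (Vmax * tvDist (P q) (P' q)) :=
          mul_le_mul hγ1.le habs (abs_nonneg _) zero_le_one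
      _ = Vmax * tvDist (P q) (P' q) := one_mul _
  have hgb : ∀ q, |gD q| ≤ Vmax + 1 := by
    intro q
    show abs (Vmax * tvDist (P q) (P' q) + |R q - R' q|) ≤ Vmax + 1
    rw [abs_of_nonneg (add_nonneg (mul_nonneg hVmax0 (htv0 q)) (abs_nonneg _))]
    have h1 : Vmax * tvDist (P q) (P' q) ≤ Vmax * 1 :=
      mul_le_mul_of_nonneg_left (htv1 q) hVmax0
    have h2 : |R q - R' q| ≤ 1 := by
      have := (hR q).1; have := (hR q).2; have := (hR' q).1; have := (hR' q).2
      exact abs_le.mpr ⟨by linarith, by linarith⟩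
    linarith
  set aa : ℕ → ℝ := fun t => γ ^ t * ∑ q : S × A, dt t q * R q with haadef
  set cc : ℕ → ℝ := fun t => γ ^ t * ∑ q : S × A, dt t q * Q q with hccdef
  set bb : ℕ → ℝ := fun t => γ ^ t * ∑ q : S × A, dt t q * fD q with hbbdef
  set ee : ℕ → ℝ := fun t => γ ^ t * ∑ q : S × A, dt t q * gD q with heedef
  have ha : Summable aa := summable_geom_bound hγ0 hγ1 fun t =>
    inner_abs_le_const (hdt0 t) (hdt1 t) hR1
  have hc : Summable cc := summable_geom_bound hγ0 hγ1 fun t =>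
    inner_abs_le_const (hdt0 t) (hdt1 t) hQb
  have he : Summable ee := summable_geom_bound hγ0 hγ1 fun t =>
    inner_abs_le_const (hdt0 t) (hdt1 t) hgb
  have hstep : ∀ t, ∑ q : S × A, dt (t + 1) q * Q q
      = ∑ p : S × A, dt t p * ∑ s' : S, P p s' * Vv s' := by
    intro t
    have : dt (t + 1) = mdpStep P pol (dt t) := rfl
    rw [this]
    exact inner_mdpStep (dt t) Q Vv hVQ
  have hb_eq : ∀ t, bb t = aa t + (cc (t + 1) - cc t) := by
    intro t
    have hq : ∀ q, fD q = R q + γ * (∑ s' : S, P q s' * Vv s') - Q q := by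
      intro q
      show R q - R' q + γ * ∑ s' : S, (P q s' - P' q s') * Vv s' = _
      rw [hBell q]
      have : ∑ s' : S, (P q s' - P' q s') * Vv s'
          = (∑ s' : S, P q s' * Vv s') - ∑ s' : S, P' q s' * Vv s' := by
        rw [← Finset.sum_sub_distrib]
        apply Finset.sum_congr rfl
        intro s' _
        ring
      rw [this]
      ring
    have hsplit : ∑ q : S × A, dt t q * fD q
        = (∑ q : S × A, dt t q * R q)
          + γ * (∑ q : S × A, dt t q * ∑ s' : S, P q s' * Vv s')
          - ∑ q : S × A, dt t q * Q q := by
      rw [Finset.mul_sum, ← Finset.sum_add_distrib, ← Finset.sum_sub_distrib]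
      apply Finset.sum_congr rfl
      intro q _
      rw [hq q]
      ring
    show γ ^ t * ∑ q : S × A, dt t q * fD q
        = γ ^ t * (∑ q : S × A, dt t q * R q)
          + (γ ^ (t + 1) * ∑ q : S × A, dt (t + 1) q * Q q
            - γ ^ t * ∑ q : S × A, dt t q * Q q)
    rw [hsplit, hstep t, pow_succ]
    ring
  have hcshift : Summable fun t => cc (t + 1) := (summable_nat_add_iff 1).2 hc
  have htelsum : Summable fun t => cc (t + 1) - cc t := hcshift.sub hc
  have hc0 : Filter.Tendsto cc Filter.atTop (nhds 0) := by
    apply squeeze_zero_norm (a := fun t => γ ^ t * (1 - γ)⁻¹)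
    · intro t
      show ‖γ ^ t * ∑ q : S × A, dt t q * Q q‖ ≤ γ ^ t * (1 - γ)⁻¹
      rw [Real.norm_eq_abs, abs_mul, abs_pow, abs_of_nonneg hγ0]
      exact mul_le_mul_of_nonneg_left (inner_abs_le_const (hdt0 t) (hdt1 t) hQb)
        (pow_nonneg hγ0 t)
    · have h := tendsto_pow_atTop_nhds_zero_of_lt_one hγ0 hγ1
      simpa using h.mul_const (1 - γ)⁻¹
  have htel : HasSum (fun t => cc (t + 1) - cc t) (0 - cc 0) := by
    rw [htelsum.hasSum_iff_tendsto_nat]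
    have hps : ∀ n, ∑ i ∈ Finset.range n, (cc (i + 1) - cc i) = cc n - cc 0 := fun n =>
      Finset.sum_range_sub cc n
    simp only [hps]
    exact hc0.sub tendsto_const_nhds
  have hJa : HasSum aa (JgenSA P R pol d0π γ) := by
    have h := ha.hasSum
    have : JgenSA P R pol d0π γ = ∑' t, aa t := rfl
    rw [this]
    exact h
  have hbsum : HasSum bb (JgenSA P R pol d0π γ + (0 - cc 0)) := by
    have h := hJa.add htel
    have hfe : (fun t => aa t + (cc (t + 1) - cc t)) = bb := by
      funext t
      rw [hb_eq t]
    rwa [hfe] at h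
  have hJ' : Jret P' R' pol d0 γ = cc 0 := by
    unfold Jret
    rw [JgenSA_linear hγ0 hγ1 hP'0 hP'1 hpol0 hpol1 hR'1]
    rw [hccdef]
    simp only [pow_zero, one_mul]
    rfl
  have hdiff : Jret P R pol d0 γ - Jret P' R' pol d0 γ = ∑' t, bb t := by
    rw [hJ', hbsum.tsum_eq]
    have : Jret P R pol d0 γ = JgenSA P R pol d0π γ := rfl
    rw [this]
    ring
  rw [hdiff]
  have hbe : |∑' t, bb t| ≤ ∑' t, ee t := by
    have hnorm : ∀ t, ‖bb t‖ ≤ ee t := by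
      intro t
      show ‖γ ^ t * ∑ q : S × A, dt t q * fD q‖ ≤ γ ^ t * ∑ q : S × A, dt t q * gD q
      rw [Real.norm_eq_abs, abs_mul, abs_pow, abs_of_nonneg hγ0]
      exact mul_le_mul_of_nonneg_left (inner_abs_le (hdt0 t) hfg) (pow_nonneg hγ0 t)
    have h := tsum_of_norm_bounded he.hasSum hnorm
    rwa [Real.norm_eq_abs] at h
  refine hbe.trans (le_of_eq ?_)
  have hsummand : ∀ (h : S × A → ℝ), (∀ q, |h q| ≤ Vmax + 1) →
      ∀ q : S × A, Summable fun t => γ ^ t * (dt t q * h q) := by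
    intro h hh q
    refine summable_geom_bound (C := Vmax + 1) hγ0 hγ1 fun t => ?_
    rw [abs_mul, abs_of_nonneg (hdt0 t q)]
    calc dt t q * |h q| ≤ 1 * (Vmax + 1) :=
        mul_le_mul (hdtle1 t q) (hh q) (abs_nonneg _) zero_le_one
      _ = Vmax + 1 := one_mul _
  have hswap : ∑' t, ee t = ∑ q : S × A, (∑' t, γ ^ t * dt t q) * gD q := by
    calc ∑' t, ee t = ∑' t, ∑ q : S × A, γ ^ t * (dt t q * gD q) := by
          apply tsum_congr
          intro t
          show γ ^ t * ∑ q : S × A, dt t q * gD q = _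
          rw [Finset.mul_sum]
      _ = ∑ q : S × A, ∑' t, γ ^ t * (dt t q * gD q) :=
          Summable.tsum_finsetSum fun q _ => hsummand gD hgb q
      _ = ∑ q : S × A, (∑' t, γ ^ t * dt t q) * gD q := by
          apply Finset.sum_congr rfl
          intro q _
          rw [← tsum_mul_right]
          apply tsum_congr
          intro t
          ring
  rw [hswap]
  have hocc : ∀ q, occSA P pol d0 γ q = (1 - γ) * ∑' t, γ ^ t * dt t q := by
    intro q
    rfl
  simp only [hocc]
  rw [Finset.mul_sum, Finset.mul_sum, ← Finset.sum_add_distrib]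
  apply Finset.sum_congr rfl
  intro q _
  simp only [hgDdef]
  field_simp


end
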